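/- Let (V, s, t, c) be a flow network, let f be a maximum flow, and let D ⊆ V with s, t ∉ D be an out-tree rooted at a vertex v ∈ D: there is a function par : D → V such that for every w ∈ D, c w (par w) > 0 and c w u = 0 for every u ≠ par w (each w ∈ D has a unique outgoing positive-capacity edge, to par w); par w ∈ D for every w ∈ D \ {v}, while par v ∉ D; and for every w ∈ D, iterating par starting from w reaches v after finitely many steps. If v ∈ S_f ∪ U_f, then D ⊆ S_f ∪ U_f; moreover, if additionally par v ∈ T_f, then every maximum flow g in the network satisfies g v (par v) = c v (par v) (the edge from v to par v is saturated by every maximum flow). -/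

import Mathlib

open scoped Classical

/-- A flow network: a finite vertex type with a source `s`, a sink `t` and a
capacity function `c` with no self-loops, no edges into `s` and no edges out of `t`. -/
structure FlowNet (V : Type) [Fintype V] where
  s : V
  t : V
  hst : s ≠ t
  c : V → V → ℕ
  c_self : ∀ v, c v v = 0
  c_to_s : ∀ v, c v s = 0
  c_from_t : ∀ v, c t v = 0

namespace FlowNet

variable {V : Type} [Fintype V]

/-- `f` is a flow: capacity-respecting and conserving flow at all internal vertices. -/
def IsFlow (N : FlowNet V) (f : V → V → ℕ) : Prop :=
  (∀ u v, f u v ≤ N.c u v) ∧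
  ∀ v, v ≠ N.s → v ≠ N.t → (∑ u, f u v) = ∑ u, f v u

/-- The value of a flow: total flow out of the source. -/
def value (N : FlowNet V) (f : V → V → ℕ) : ℕ := ∑ v, f N.s v

/-- `f` is a maximum flow. -/
def IsMaxFlow (N : FlowNet V) (f : V → V → ℕ) : Prop :=
  N.IsFlow f ∧ ∀ f', N.IsFlow f' → N.value f' ≤ N.value f

/-- Edge of the residual graph of `f`. -/
def ResEdge (N : FlowNet V) (f : V → V → ℕ) (u v : V) : Prop :=
  f u v < N.c u v ∨ 0 < f v u

/-- `S_f`: vertices reachable from `s` in the residual graph of `f`. -/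
def Sset (N : FlowNet V) (f : V → V → ℕ) : Set V :=
  {v | Relation.ReflTransGen (N.ResEdge f) N.s v}

/-- `T_f`: vertices from which `t` is reachable in the residual graph of `f`. -/
def Tset (N : FlowNet V) (f : V → V → ℕ) : Set V :=
  {v | Relation.ReflTransGen (N.ResEdge f) v N.t}

/-- `U_f`: all remaining vertices. -/
def Uset (N : FlowNet V) (f : V → V → ℕ) : Set V :=
  (N.Sset f ∪ N.Tset f)ᶜ

/-- An s-t cut: a set of vertices containing `s` but not `t`. -/
def IsCut (N : FlowNet V) (X : Set V) : Prop :=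
  N.s ∈ X ∧ N.t ∉ X

/-- The capacity of a cut. -/
noncomputable def cap (N : FlowNet V) (X : Set V) : ℕ :=
  ∑ u, ∑ v, if u ∈ X ∧ v ∉ X then N.c u v else 0

/-- A minimum s-t cut. -/
def IsMinCut (N : FlowNet V) (X : Set V) : Prop :=
  N.IsCut X ∧ ∀ Y, N.IsCut Y → N.cap X ≤ N.cap Y

end FlowNet

private lemma dup_decomp {α : Type*} {x : α} {L : List α} (h : List.Duplicate x L) :
    ∃ l1 l2, L = l1 ++ x :: l2 ∧ x ∈ l2 := by
  induction h with
  | cons_mem h => exact ⟨[], _, rfl, h⟩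
  | @cons_duplicate y l h ih =>
    obtain ⟨l1, l2, rfl, hx⟩ := ih
    exact ⟨y :: l1, l2, rfl, hx⟩

private lemma exists_nodup_chain {α : Type*} {r : α → α → Prop} {a b : α}
    (h : Relation.ReflTransGen r a b) :
    ∃ l, List.Chain r a l ∧ (a :: l).getLast? = some b ∧ (a :: l).Nodup := by
  obtain ⟨l0, hc0, hl0⟩ := List.exists_isChain_cons_of_relationReflTransGen h
  have hl0' : (a :: l0).getLast? = some b := by
    rw [List.getLast?_eq_getLast_of_ne_nil (List.cons_ne_nil _ _), hl0]
  clear hl0 h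
  have key : ∀ n (a : α) (l : List α), l.length ≤ n → List.Chain r a l →
      (a :: l).getLast? = some b →
      ∃ l', List.Chain r a l' ∧ (a :: l').getLast? = some b ∧ (a :: l').Nodup := by
    intro n
    induction n with
    | zero =>
      intro a l hlen hc hl
      have : l = [] := List.length_eq_zero_iff.1 (Nat.le_zero.1 hlen)
      subst this
      exact ⟨[], List.Chain.nil, hl, List.nodup_singleton a⟩
    | succ n ih =>
      intro a l hlen hc hl
      by_cases hnd : (a :: l).Nodup
      · exact ⟨l, hc, hl, hnd⟩
      · obtain ⟨x, hx⟩ := List.exists_duplicate_iff_not_nodup.2 hnd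
        obtain ⟨l1, l2, heq, hx2⟩ := dup_decomp hx
        obtain ⟨l2a, l3, rfl⟩ := List.append_of_mem hx2
        cases l1 with
        | nil =>
          rw [List.nil_append] at heq
          injection heq with ha hll
          subst ha; subst hll
          have hc3 : List.Chain r a l3 := (List.isChain_cons_split.1 hc).2
          have hl3 : (a :: l3).getLast? = some b := by
            have e : a :: (l2a ++ a :: l3) = (a :: l2a) ++ a :: l3 := by simp
            rw [e, List.getLast?_append_cons] at hl
            exact hl
          exact ih a l3 (by simp at hlen ⊢; omega) hc3 hl3
        | cons a' l1' =>
          injection heq with ha hll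
          subst ha; subst hll
          simp only [List.append_eq] at hc hl hlen hnd
          have hc1 := List.isChain_cons_split.1 hc
          have hc2 := List.isChain_cons_split.1 hc1.2
          have hc' : List.Chain r a (l1' ++ x :: l3) := List.isChain_cons_split.2 ⟨hc1.1, hc2.2⟩
          have hl' : (a :: (l1' ++ x :: l3)).getLast? = some b := by
            have e1 : a :: (l1' ++ x :: (l2a ++ x :: l3))
                = (a :: l1') ++ x :: (l2a ++ x :: l3) := by simp
            have e2 : x :: (l2a ++ x :: l3) = (x :: l2a) ++ x :: l3 := by simp
            have e3 : a :: (l1' ++ x :: l3) = (a :: l1') ++ x :: l3 := by simp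
            rw [e1, List.getLast?_append_cons, e2, List.getLast?_append_cons] at hl
            rw [e3, List.getLast?_append_cons]
            exact hl
          exact ih a (l1' ++ x :: l3) (by simp at hlen ⊢; omega) hc' hl'
  exact key l0.length a l0 le_rfl hc0 hl0'

namespace FlowNet

variable {V : Type} [Fintype V]

/-- Pseudo-flow invariant: one unit of excess sits at `u` (unless `u = s`). -/
def Inv (N : FlowNet V) (f g : V → V → ℕ) (u : V) : Prop :=
  (∀ a b, g a b ≤ N.c a b) ∧
  (∀ w, w ≠ N.s → w ≠ N.t → (∑ a, g a w) = (∑ a, g w a) + (if w = u then 1 else 0)) ∧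
  (∑ a, g N.s a) = N.value f + (if u = N.s then 0 else 1)

lemma inv_forward (N : FlowNet V) (f g : V → V → ℕ) (u u' : V) (hInv : N.Inv f g u)
    (hlt : g u u' < N.c u u') :
    N.Inv f (fun a b => g a b + (if a = u ∧ b = u' then 1 else 0)) u' := by
  obtain ⟨hle, hcons, hval⟩ := hInv
  have hu's : u' ≠ N.s := by
    intro h; subst h; rw [N.c_to_s] at hlt; omega
  have hin : ∀ w, (∑ a, (g a w + (if a = u ∧ w = u' then 1 else 0)))
      = (∑ a, g a w) + (if w = u' then 1 else 0) := by
    intro w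
    rw [Finset.sum_add_distrib]
    congr 1
    by_cases hw : w = u' <;> simp [hw]
  have hout : ∀ w, (∑ b, (g w b + (if w = u ∧ b = u' then 1 else 0)))
      = (∑ b, g w b) + (if w = u then 1 else 0) := by
    intro w
    rw [Finset.sum_add_distrib]
    congr 1
    by_cases hw : w = u <;> simp [hw]
  refine ⟨?_, ?_, ?_⟩
  · intro a b
    by_cases h : a = u ∧ b = u'
    · obtain ⟨rfl, rfl⟩ := h; simpa using hlt
    · simp [h]; exact hle a b
  · intro w hws hwt
    rw [hin, hout]
    have := hcons w hws hwt
    by_cases h1 : w = u <;> by_cases h2 : w = u' <;> simp [h1, h2] at this ⊢ <;> omega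
  · rw [hout]
    by_cases h1 : u = N.s
    · subst h1; simp [hu's] at hval ⊢; omega
    · have h1' : N.s ≠ u := fun h => h1 h.symm
      simp [h1, h1', hu's] at hval ⊢; omega

lemma inv_backward (N : FlowNet V) (f g : V → V → ℕ) (u u' : V) (hInv : N.Inv f g u)
    (hpos : 0 < g u' u) :
    N.Inv f (fun a b => g a b - (if a = u' ∧ b = u then 1 else 0)) u' := by
  obtain ⟨hle, hcons, hval⟩ := hInv
  have hus : u ≠ N.s := by
    intro h; subst h
    have := hle u' N.s; rw [N.c_to_s] at this; omega
  have hg : ∀ a b, g a b = (g a b - (if a = u' ∧ b = u then 1 else 0))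
      + (if a = u' ∧ b = u then 1 else 0) := by
    intro a b
    by_cases h : a = u' ∧ b = u
    · obtain ⟨rfl, rfl⟩ := h; simp; omega
    · simp [h]
  have hin : ∀ w, (∑ a, g a w)
      = (∑ a, (g a w - (if a = u' ∧ w = u then 1 else 0))) + (if w = u then 1 else 0) := by
    intro w
    rw [show (∑ a, g a w) = ∑ a, ((g a w - (if a = u' ∧ w = u then 1 else 0))
        + (if a = u' ∧ w = u then 1 else 0)) from Finset.sum_congr rfl (fun a _ => hg a w),
      Finset.sum_add_distrib]
    congr 1
    by_cases hw : w = u <;> simp [hw]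
  have hout : ∀ w, (∑ b, g w b)
      = (∑ b, (g w b - (if w = u' ∧ b = u then 1 else 0))) + (if w = u' then 1 else 0) := by
    intro w
    rw [show (∑ b, g w b) = ∑ b, ((g w b - (if w = u' ∧ b = u then 1 else 0))
        + (if w = u' ∧ b = u then 1 else 0)) from Finset.sum_congr rfl (fun b _ => hg w b),
      Finset.sum_add_distrib]
    congr 1
    by_cases hw : w = u' <;> simp [hw]
  refine ⟨?_, ?_, ?_⟩
  · intro a b
    exact le_trans (Nat.sub_le _ _) (hle a b)
  · intro w hws hwt
    have h0 := hcons w hws hwt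
    rw [hin w, hout w] at h0
    by_cases h1 : w = u <;> by_cases h2 : w = u' <;> simp [h1, h2] at h0 ⊢ <;> omega
  · have h0 := hval
    rw [hout N.s] at h0
    by_cases h1 : u' = N.s
    · subst h1; simp [hus] at h0 ⊢; omega
    · have h1' : N.s ≠ u' := fun h => h1 h.symm
      simp [h1, h1', hus] at h0 ⊢; omega

lemma push (N : FlowNet V) (f : V → V → ℕ) :
    ∀ (l : List V) (u : V) (g : V → V → ℕ) (W : Finset V),
      List.Chain (N.ResEdge f) u l → (u :: l).getLast? = some N.t →
      N.Inv f g u →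
      (∀ a b : V, a ∉ W ∨ b ∉ W → g a b = f a b) →
      u ∈ W → (∀ x ∈ l, x ∉ W) → l.Nodup →
      ∃ g', N.IsFlow g' ∧ N.value g' = N.value f + 1 := by
  intro l
  induction l with
  | nil =>
    intro u g W _ hlast hInv _ _ _ _
    have hut : u = N.t := by simpa using hlast
    subst hut
    obtain ⟨hle, hcons, hval⟩ := hInv
    refine ⟨g, ⟨hle, ?_⟩, ?_⟩
    · intro w hws hwt
      have := hcons w hws hwt
      simpa [hwt] using this
    · have : (N.t = N.s) = False := by simp [Ne.symm N.hst]
      simpa [value, N.hst, Ne.symm N.hst] using hval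
  | cons u' l ih =>
    intro u g W hchain hlast hInv hW huW hlW hnd
    have hedge : N.ResEdge f u u' := (List.chain_cons.1 hchain).1
    have hchain' : List.Chain (N.ResEdge f) u' l := (List.chain_cons.1 hchain).2
    have hlast' : (u' :: l).getLast? = some N.t := by
      rw [show u :: u' :: l = [u] ++ u' :: l from rfl, List.getLast?_append_cons] at hlast
      exact hlast
    have hu'W : u' ∉ W := hlW u' (by simp)
    have hg1 : g u u' = f u u' := hW u u' (Or.inr hu'W)
    have hg2 : g u' u = f u' u := hW u' u (Or.inl hu'W)
    have hlW' : ∀ x ∈ l, x ∉ insert u' W := by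
      intro x hx
      simp only [Finset.mem_insert, not_or]
      exact ⟨fun h => (List.nodup_cons.1 hnd).1 (h ▸ hx), hlW x (by simp [hx])⟩
    have hnd' : l.Nodup := (List.nodup_cons.1 hnd).2
    rcases hedge with hlt | hpos
    · rw [← hg1] at hlt
      refine ih u' (fun a b => g a b + (if a = u ∧ b = u' then 1 else 0)) (insert u' W)
        hchain' hlast' (N.inv_forward f g u u' hInv hlt) ?_ (Finset.mem_insert_self _ _)
        hlW' hnd'
      intro a b hab
      have h1 : a ∉ W ∨ b ∉ W := by
        rcases hab with h | h <;> [left; right] <;> simp only [Finset.mem_insert, not_or] at h <;>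
          exact h.2
      have h2 : ¬(a = u ∧ b = u') := by
        rintro ⟨rfl, rfl⟩
        rcases hab with h | h
        · exact h (Finset.mem_insert_of_mem huW)
        · exact h (Finset.mem_insert_self _ _)
      simp [h2, hW a b h1]
    · rw [← hg2] at hpos
      refine ih u' (fun a b => g a b - (if a = u' ∧ b = u then 1 else 0)) (insert u' W)
        hchain' hlast' (N.inv_backward f g u u' hInv hpos) ?_ (Finset.mem_insert_self _ _)
        hlW' hnd'
      intro a b hab
      have h1 : a ∉ W ∨ b ∉ W := by
        rcases hab with h | h <;> [left; right] <;> simp only [Finset.mem_insert, not_or] at h <;>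
          exact h.2
      have h2 : ¬(a = u' ∧ b = u) := by
        rintro ⟨rfl, rfl⟩
        rcases hab with h | h
        · exact h (Finset.mem_insert_self _ _)
        · exact h (Finset.mem_insert_of_mem huW)
      simp [h2, hW a b h1]

lemma no_augmenting (N : FlowNet V) (f : V → V → ℕ) (hf : N.IsMaxFlow f) :
    ¬ Relation.ReflTransGen (N.ResEdge f) N.s N.t := by
  intro h
  obtain ⟨l, hc, hl, hnd⟩ := exists_nodup_chain h
  have hInv : N.Inv f f N.s := by
    refine ⟨hf.1.1, fun w hws hwt => by simp [hws, hf.1.2 w hws hwt], by simp [value]⟩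
  have hsl : N.s ∉ l := (List.nodup_cons.1 hnd).1
  obtain ⟨g, hg, hv⟩ := N.push f l N.s f {N.s} hc hl hInv (fun _ _ _ => rfl)
    (Finset.mem_singleton_self _)
    (fun x hx => by simp only [Finset.mem_singleton]; exact fun h => hsl (h ▸ hx))
    ((List.nodup_cons.1 hnd).2)
  have := hf.2 g hg
  omega

lemma flow_cross (N : FlowNet V) (g : V → V → ℕ) (hg : N.IsFlow g) (X : Set V)
    (hs : N.s ∈ X) (ht : N.t ∉ X) :
    (∑ u, ∑ w, if u ∈ X ∧ w ∉ X then g u w else 0)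
      = N.value g + ∑ u, ∑ w, if u ∈ X ∧ w ∉ X then g w u else 0 := by
  have hgs : ∀ a, g a N.s = 0 := fun a => Nat.le_zero.1 ((hg.1 a N.s).trans_eq (N.c_to_s a))
  have key : ∀ w, (if w ∈ X then (∑ a, g w a) else 0)
      = (if w ∈ X then (∑ a, g a w) else 0) + (if w = N.s then N.value g else 0) := by
    intro w
    by_cases hw : w ∈ X
    · by_cases hws : w = N.s
      · subst hws
        simp [hw, value, Finset.sum_eq_zero (fun a _ => hgs a)]
      · have hwt : w ≠ N.t := fun h => ht (h ▸ hw)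
        simp [hw, hws, hg.2 w hws hwt]
    · have hws : w ≠ N.s := fun h => hw (h ▸ hs)
      simp [hw, hws]
  have hkey : (∑ w, if w ∈ X then (∑ a, g w a) else 0)
      = (∑ w, if w ∈ X then (∑ a, g a w) else 0) + N.value g := by
    rw [Finset.sum_congr rfl fun w _ => key w, Finset.sum_add_distrib]
    congr 1
    simp
  have out_split : (∑ w, if w ∈ X then (∑ a, g w a) else 0)
      = (∑ w, ∑ a, if w ∈ X ∧ a ∈ X then g w a else 0)
        + ∑ w, ∑ a, if w ∈ X ∧ a ∉ X then g w a else 0 := by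
    rw [← Finset.sum_add_distrib]
    refine Finset.sum_congr rfl fun w _ => ?_
    rw [← Finset.sum_add_distrib]
    by_cases hw : w ∈ X
    · simp only [hw, if_true, true_and]
      exact Finset.sum_congr rfl fun a _ => by by_cases ha : a ∈ X <;> simp [ha]
    · simp [hw]
  have in_split : (∑ w, if w ∈ X then (∑ a, g a w) else 0)
      = (∑ w, ∑ a, if w ∈ X ∧ a ∈ X then g a w else 0)
        + ∑ w, ∑ a, if w ∈ X ∧ a ∉ X then g a w else 0 := by
    rw [← Finset.sum_add_distrib]
    refine Finset.sum_congr rfl fun w _ => ?_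
    rw [← Finset.sum_add_distrib]
    by_cases hw : w ∈ X
    · simp only [hw, if_true, true_and]
      exact Finset.sum_congr rfl fun a _ => by by_cases ha : a ∈ X <;> simp [ha]
    · simp [hw]
  have inside_eq : (∑ w, ∑ a, if w ∈ X ∧ a ∈ X then g a w else 0)
      = ∑ w, ∑ a, if w ∈ X ∧ a ∈ X then g w a else 0 := by
    rw [Finset.sum_comm]
    refine Finset.sum_congr rfl fun a _ => Finset.sum_congr rfl fun w _ => ?_
    by_cases h1 : w ∈ X <;> by_cases h2 : a ∈ X <;> simp [h1, h2]
  omega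

lemma cut_saturate (N : FlowNet V) (f : V → V → ℕ) (hf : N.IsMaxFlow f)
    (X : Set V) (hs : N.s ∈ X) (ht : N.t ∉ X)
    (hsat : ∀ u ∈ X, ∀ w, w ∉ X → f u w = N.c u w)
    (hback : ∀ u ∈ X, ∀ w, w ∉ X → f w u = 0)
    (g : V → V → ℕ) (hg : N.IsMaxFlow g) :
    ∀ u ∈ X, ∀ w, w ∉ X → g u w = N.c u w := by
  have hvfg : N.value g = N.value f := le_antisymm (hf.2 g hg.1) (hg.2 f hf.1)
  have h1 := N.flow_cross f hf.1 X hs ht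
  have hCOf : (∑ u, ∑ w, if u ∈ X ∧ w ∉ X then f u w else 0)
      = ∑ u, ∑ w, if u ∈ X ∧ w ∉ X then N.c u w else 0 := by
    refine Finset.sum_congr rfl fun u _ => Finset.sum_congr rfl fun w _ => ?_
    by_cases h : u ∈ X ∧ w ∉ X
    · simp [h, hsat u h.1 w h.2]
    · simp [h]
  have hCIf : (∑ u, ∑ w, if u ∈ X ∧ w ∉ X then f w u else 0) = 0 := by
    refine Finset.sum_eq_zero fun u _ => Finset.sum_eq_zero fun w _ => ?_
    by_cases h : u ∈ X ∧ w ∉ X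
    · simp [h, hback u h.1 w h.2]
    · simp [h]
  have h2 := N.flow_cross g hg.1 X hs ht
  have hle2 : ∀ u ∈ (Finset.univ : Finset V),
      (∑ w, if u ∈ X ∧ w ∉ X then g u w else 0)
        ≤ ∑ w, if u ∈ X ∧ w ∉ X then N.c u w else 0 := by
    intro u _
    refine Finset.sum_le_sum fun w _ => ?_
    by_cases h : u ∈ X ∧ w ∉ X
    · simp [h, hg.1.1 u w]
    · simp [h]
  have hCOg_le : (∑ u, ∑ w, if u ∈ X ∧ w ∉ X then g u w else 0)
      ≤ ∑ u, ∑ w, if u ∈ X ∧ w ∉ X then N.c u w else 0 :=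
    Finset.sum_le_sum hle2
  have hCOg : (∑ u, ∑ w, if u ∈ X ∧ w ∉ X then g u w else 0)
      = ∑ u, ∑ w, if u ∈ X ∧ w ∉ X then N.c u w else 0 := by omega
  intro u hu w hw
  have houter := (Finset.sum_eq_sum_iff_of_le hle2).1 hCOg u (Finset.mem_univ u)
  have hinner : ∀ x ∈ (Finset.univ : Finset V),
      (if u ∈ X ∧ x ∉ X then g u x else 0) ≤ (if u ∈ X ∧ x ∉ X then N.c u x else 0) := by
    intro x _
    by_cases h : u ∈ X ∧ x ∉ X
    · simp [h, hg.1.1 u x]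
    · simp [h]
  have := (Finset.sum_eq_sum_iff_of_le hinner).1 houter w (Finset.mem_univ w)
  simpa [hu, hw] using this

end FlowNet

/-- let `D` be an out-tree rooted at `v` (each `w ∈ D` has a unique outgoing
positive-capacity edge, to `par w`). If `v ∈ S_f ∪ U_f` then `D ⊆ S_f ∪ U_f`; moreover
if additionally `par v ∈ T_f` then every maximum flow saturates the edge from `v` to `par v`. -/
theorem stmt7 {V : Type} [Fintype V] (N : FlowNet V) (f : V → V → ℕ)
    (hf : N.IsMaxFlow f)
    (D : Set V) (hsD : N.s ∉ D) (htD : N.t ∉ D)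
    (v : V) (hvD : v ∈ D) (par : V → V)
    (hpar1 : ∀ w ∈ D, 0 < N.c w (par w) ∧ ∀ u, u ≠ par w → N.c w u = 0)
    (hpar2 : ∀ w ∈ D, w ≠ v → par w ∈ D)
    (hpar3 : par v ∉ D)
    (hpar4 : ∀ w ∈ D, ∃ k : ℕ, par^[k] w = v)
    (hvSU : v ∈ N.Sset f ∪ N.Uset f) :
    D ⊆ N.Sset f ∪ N.Uset f ∧
      (par v ∈ N.Tset f →
        ∀ g, N.IsMaxFlow g → g v (par v) = N.c v (par v)) := by
  classical
  have hfl := hf.1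
  have hD_ne_s : ∀ w ∈ D, w ≠ N.s := fun w hw h => hsD (h ▸ hw)
  have hD_ne_t : ∀ w ∈ D, w ≠ N.t := fun w hw h => htD (h ▸ hw)
  have hout : ∀ w ∈ D, (∑ a, f w a) = f w (par w) := by
    intro w hw
    refine Finset.sum_eq_single (par w) (fun a _ ha => ?_)
      (fun h => absurd (Finset.mem_univ _) h)
    exact Nat.le_zero.1 ((hfl.1 w a).trans_eq ((hpar1 w hw).2 a ha))
  have hpos_out : ∀ w ∈ D, ∀ x, 0 < f x w → 0 < f w (par w) := by
    intro w hw x hx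
    have hcons := hfl.2 w (hD_ne_s w hw) (hD_ne_t w hw)
    have hlt : 0 < ∑ a, f a w :=
      lt_of_lt_of_le hx (Finset.single_le_sum (f := fun a => f a w) (fun a _ => Nat.zero_le _) (Finset.mem_univ x))
    rw [hcons, hout w hw] at hlt
    exact hlt
  have down : ∀ k, ∀ x, x ∈ D → par^[k] x = v → 0 < f x (par x) →
      Relation.ReflTransGen (N.ResEdge f) v x := by
    intro k
    induction k with
    | zero =>
      intro x _ hk _
      rw [Function.iterate_zero_apply] at hk
      exact hk ▸ Relation.ReflTransGen.refl
    | succ k ih =>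
      intro x hx hk hfx
      by_cases hxv : x = v
      · exact hxv ▸ Relation.ReflTransGen.refl
      · have hpx : par x ∈ D := hpar2 x hx hxv
        have hk' : par^[k] (par x) = v := by
          rw [← Function.iterate_succ_apply]; exact hk
        have hgpx : 0 < f (par x) (par (par x)) := hpos_out (par x) hpx x hfx
        exact (ih (par x) hpx hk' hgpx).tail (Or.inr hfx)
  have Tprop : ∀ w, Relation.ReflTransGen (N.ResEdge f) w N.t → w ∈ D →
      Relation.ReflTransGen (N.ResEdge f) v N.t := by
    intro w hw
    refine Relation.ReflTransGen.head_induction_on hw ?_ ?_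
    · intro hD; exact absurd hD htD
    · intro a c' hedge hpath ih haD
      by_cases hcD : c' ∈ D
      · exact ih hcD
      · rcases hedge with hlt | hpos
        · have hc : c' = par a := by
            by_contra hne
            rw [(hpar1 a haD).2 c' hne] at hlt; omega
          have hav : a = v := by
            by_contra hne
            exact hcD (hc ▸ hpar2 a haD hne)
          subst hav
          exact hpath.head (Or.inl hlt)
        · have h1 : 0 < f a (par a) := hpos_out a haD c' hpos
          obtain ⟨k, hk⟩ := hpar4 a haD
          exact (down k a haD hk h1).trans (hpath.head (Or.inr hpos))
  have hvT : v ∉ N.Tset f := by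
    intro hvT
    have hvt : Relation.ReflTransGen (N.ResEdge f) v N.t := hvT
    rcases hvSU with hvS | hvU
    · exact N.no_augmenting f hf ((hvS : Relation.ReflTransGen _ N.s v).trans hvt)
    · exact hvU (Or.inr hvT)
  constructor
  · intro w hw
    by_cases hwS : w ∈ N.Sset f
    · exact Or.inl hwS
    · refine Or.inr ?_
      simp only [FlowNet.Uset, Set.mem_compl_iff, Set.mem_union, not_or]
      exact ⟨hwS, fun hT => hvT (Tprop w hT hw)⟩
  · intro hpvT g hg
    have hsX : N.s ∈ (N.Tset f)ᶜ := fun h => N.no_augmenting f hf h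
    have htX : N.t ∉ (N.Tset f)ᶜ := fun h => h Relation.ReflTransGen.refl
    have hTclosed : ∀ u w, N.ResEdge f u w → w ∈ N.Tset f → u ∈ N.Tset f :=
      fun u w he hw => Relation.ReflTransGen.head he hw
    have hsat : ∀ u ∈ (N.Tset f)ᶜ, ∀ w, w ∉ (N.Tset f)ᶜ → f u w = N.c u w := by
      intro u hu w hw
      have hwT : w ∈ N.Tset f := not_not.1 hw
      by_contra hne
      exact hu (hTclosed u w (Or.inl (lt_of_le_of_ne (hfl.1 u w) hne)) hwT)
    have hback : ∀ u ∈ (N.Tset f)ᶜ, ∀ w, w ∉ (N.Tset f)ᶜ → f w u = 0 := by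
      intro u hu w hw
      have hwT : w ∈ N.Tset f := not_not.1 hw
      by_contra hne
      exact hu (hTclosed u w (Or.inr (Nat.pos_of_ne_zero hne)) hwT)
    exact N.cut_saturate f hf ((N.Tset f)ᶜ) hsX htX hsat hback g hg v hvT (par v)
      (not_not.2 hpvT)
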